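/- Let n > 2k and s > n/k, and let X₁, …, X_s be families of k-element subsets of an n-element set such that A ∩ B ≠ ∅ whenever A ∈ Xᵢ, B ∈ Xⱼ with i ≠ j. Then Σ_{i=1}^{s} |Xᵢ| ≤ s·C(n-1, k-1). -/

import Mathlib

open Finset

def arcI (n k : ℕ) (t : ZMod n) : Finset (ZMod n) :=
  (Finset.range k).image (fun j : ℕ => t + (j : ZMod n))

lemma natCast_inj_zmod {n : ℕ} [NeZero n] {a b : ℕ} (ha : a < n) (hb : b < n)
    (h : (a : ZMod n) = (b : ZMod n)) : a = b := by
  have := congrArg ZMod.val h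
  rwa [ZMod.val_natCast_of_lt ha, ZMod.val_natCast_of_lt hb] at this

lemma arcI_card {n k : ℕ} [NeZero n] (hkn : k ≤ n) (t : ZMod n) :
    (arcI n k t).card = k := by
  rw [arcI, card_image_of_injOn, card_range]
  intro a ha b hb h
  simp only [mem_coe, mem_range] at ha hb
  exact natCast_inj_zmod (lt_of_lt_of_le ha hkn) (lt_of_lt_of_le hb hkn)
    (by exact add_left_cancel h)

lemma arcI_inter_nonempty {n k : ℕ} {t u : ZMod n} :
    (arcI n k t ∩ arcI n k u).Nonempty ↔
      ∃ a < k, ∃ b < k, t + (a : ZMod n) = u + (b : ZMod n) := by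
  constructor
  · rintro ⟨x, hx⟩
    rw [mem_inter] at hx
    obtain ⟨a, ha, hxa⟩ := mem_image.mp hx.1
    obtain ⟨b, hb, hxb⟩ := mem_image.mp hx.2
    exact ⟨a, mem_range.mp ha, b, mem_range.mp hb, by rw [hxa, hxb]⟩
  · rintro ⟨a, ha, b, hb, h⟩
    exact ⟨t + (a : ZMod n), mem_inter.mpr ⟨mem_image.mpr ⟨a, mem_range.mpr ha, rfl⟩,
      mem_image.mpr ⟨b, mem_range.mpr hb, h.symm⟩⟩⟩

lemma arcI_disjoint_shift {n k : ℕ} [NeZero n] (h2k : 2 * k ≤ n) (hk : 1 ≤ k) (t : ZMod n) :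
    ¬ (arcI n k (t + (k : ZMod n)) ∩ arcI n k t).Nonempty := by
  rw [arcI_inter_nonempty]
  rintro ⟨a, ha, b, hb, h⟩
  rw [add_assoc] at h
  have h2 : ((k + a : ℕ) : ZMod n) = (b : ZMod n) := by
    push_cast
    exact add_left_cancel h
  have := natCast_inj_zmod (by omega) (by omega) h2
  omega

lemma count_perms {α β : Type*} [Fintype α] [Fintype β] [DecidableEq α] [DecidableEq β]
    (h : Fintype.card α = Fintype.card β) (B : Finset α) (A : Finset β) (hBA : B.card = A.card) :
    (univ.filter (fun σ : α ≃ β => B.image σ = A)).card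
      = Nat.factorial A.card * Nat.factorial (Fintype.card β - A.card) := by
  have hiff : ∀ σ : α ≃ β, B.image σ = A ↔ ∀ x, x ∈ B ↔ σ x ∈ A := by
    intro σ
    constructor
    · intro hE x
      constructor
      · intro hx; rw [← hE]; exact mem_image_of_mem σ hx
      · intro hx; rw [← hE] at hx
        obtain ⟨y, hy, hyx⟩ := mem_image.mp hx
        rwa [← σ.injective hyx]
    · intro H
      apply eq_of_subset_of_card_le
      · intro y hy
        obtain ⟨x, hx, rfl⟩ := mem_image.mp hy
        exact (H x).mp hx
      · rw [card_image_of_injective _ σ.injective, hBA]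
  classical
  rw [← Fintype.card_subtype]
  have e : {σ : α ≃ β // B.image σ = A} ≃
      ({x // x ∈ B} ≃ {y // y ∈ A}) × ({x // ¬ x ∈ B} ≃ {y // ¬ y ∈ A}) := by
    refine
      { toFun := fun σ => ⟨σ.1.subtypeEquiv (fun a => ((hiff σ.1).mp σ.2) a),
          σ.1.subtypeEquiv (fun a => not_congr (((hiff σ.1).mp σ.2) a))⟩
        invFun := fun fg =>
          ⟨(Equiv.sumCompl (· ∈ B)).symm.trans
            ((fg.1.sumCongr fg.2).trans (Equiv.sumCompl (· ∈ A))), ?_⟩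
        left_inv := ?_
        right_inv := ?_ }
    · rw [hiff]
      intro x
      by_cases hx : x ∈ B
      · simp [Equiv.sumCompl_symm_apply_of_pos hx, (fg.1 ⟨x, hx⟩).2, hx]
      · simp [Equiv.sumCompl_symm_apply_of_neg hx, (fg.2 ⟨x, hx⟩).2, hx]
    · intro σ
      ext x
      by_cases hx : x ∈ B
      · simp [Equiv.sumCompl_symm_apply_of_pos hx]
      · simp [Equiv.sumCompl_symm_apply_of_neg hx]
    · intro fg
      ext x
      · simp [Equiv.sumCompl_symm_apply_of_pos x.2]
      · simp [Equiv.sumCompl_symm_apply_of_neg x.2]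
  rw [Fintype.card_congr e, Fintype.card_prod]
  have c1 : Fintype.card ({x // x ∈ B} ≃ {y // y ∈ A}) = Nat.factorial A.card := by
    have : Nonempty ({x // x ∈ B} ≃ {y // y ∈ A}) := by
      apply Fintype.card_eq.mp; simp [Fintype.card_coe, hBA]
    obtain ⟨e'⟩ := this
    rw [Fintype.card_equiv e', Fintype.card_coe, hBA]
  have c2 : Fintype.card ({x // ¬ x ∈ B} ≃ {y // ¬ y ∈ A}) =
      Nat.factorial (Fintype.card β - A.card) := by
    have hc : Fintype.card {x // ¬ x ∈ B} = Fintype.card β - A.card := by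
      rw [Fintype.card_subtype_compl, Fintype.card_coe, hBA, h]
    have hc2 : Fintype.card {y // ¬ y ∈ A} = Fintype.card β - A.card := by
      rw [Fintype.card_subtype_compl, Fintype.card_coe]
    have : Nonempty ({x // ¬ x ∈ B} ≃ {y // ¬ y ∈ A}) := by
      apply Fintype.card_eq.mp; rw [hc, hc2]
    obtain ⟨e'⟩ := this
    rw [Fintype.card_equiv e', hc]
  rw [c1, c2]

lemma pairing {n k : ℕ} [NeZero n] (hk : 1 ≤ k) (h2k : 2 * k ≤ n)
    (S M : Finset (ZMod n)) (hMS : M ⊆ S) {m₀ : ZMod n} (hm₀ : m₀ ∈ M)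
    (Hmeet : ∀ t ∈ S, ∀ u ∈ M, (arcI n k t ∩ arcI n k u).Nonempty) :
    S.card + M.card ≤ 2 * k := by
  classical
  set P : ℕ → Finset (ZMod n) := fun i =>
    {m₀ + ((i + 1 : ℕ) : ZMod n), m₀ + ((i + 1 : ℕ) : ZMod n) - ((k : ℕ) : ZMod n)} with hP
  set B : Finset (ZMod n) := (range (k - 1)).biUnion P with hB
  -- cover
  have hcover : S ⊆ insert m₀ B := by
    intro t ht
    obtain ⟨a, ha, b, hb, habe⟩ := arcI_inter_nonempty.mp (Hmeet t ht m₀ hm₀)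
    rcases lt_trichotomy a b with hab | hab | hab
    · -- t = m₀ + (b - a)
      have ht' : t = m₀ + ((b - a : ℕ) : ZMod n) := by
        have : t + (a : ZMod n) = m₀ + ((b - a : ℕ) : ZMod n) + (a : ZMod n) := by
          rw [habe]
          push_cast [Nat.cast_sub (le_of_lt hab)]
          ring
        exact add_right_cancel this
      apply mem_insert_of_mem
      rw [hB, mem_biUnion]
      refine ⟨b - a - 1, mem_range.mpr (by omega), ?_⟩
      rw [hP]
      simp only [show b - a - 1 + 1 = b - a from by omega]
      rw [ht']
      exact mem_insert_self _ _
    · -- a = b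
      subst hab
      have : t = m₀ := add_right_cancel habe
      exact this ▸ mem_insert_self _ _
    · -- t = m₀ + (k - (a - b)) - k
      have ht' : t = m₀ + ((k - (a - b) : ℕ) : ZMod n) - ((k : ℕ) : ZMod n) := by
        have : t + (a : ZMod n)
            = (m₀ + ((k - (a - b) : ℕ) : ZMod n) - ((k : ℕ) : ZMod n)) + (a : ZMod n) := by
          rw [habe]
          push_cast [Nat.cast_sub (show a - b ≤ k by omega),
            Nat.cast_sub (show b ≤ a by omega)]
          ring
        exact add_right_cancel this
      apply mem_insert_of_mem
      rw [hB, mem_biUnion]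
      refine ⟨k - (a - b) - 1, mem_range.mpr (by omega), ?_⟩
      rw [hP]
      simp only [show k - (a - b) - 1 + 1 = k - (a - b) from by omega]
      rw [ht']
      exact mem_insert_of_mem (mem_singleton_self _)
  -- per-pair bound
  have hpair : ∀ i ∈ range (k - 1), (S ∩ P i).card + (M ∩ P i).card ≤ 2 := by
    intro i _
    set x : ZMod n := m₀ + ((i + 1 : ℕ) : ZMod n) with hx
    set y : ZMod n := x - ((k : ℕ) : ZMod n) with hy
    have hxy : ¬ (arcI n k x ∩ arcI n k y).Nonempty := by
      have : y + ((k : ℕ) : ZMod n) = x := by rw [hy]; ring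
      have h1 := arcI_disjoint_shift (n := n) h2k hk y
      rwa [this] at h1
    have hyx : ¬ (arcI n k y ∩ arcI n k x).Nonempty := by
      rwa [inter_comm] at hxy
    have hPi : P i = {x, y} := rfl
    by_cases hM : (M ∩ P i).Nonempty
    · obtain ⟨m, hm⟩ := hM
      have hmM : m ∈ M := (mem_inter.mp hm).1
      have hmP : m ∈ P i := (mem_inter.mp hm).2
      have hsub : S ∩ P i ⊆ {m} := by
        intro z hz
        have hzS : z ∈ S := (mem_inter.mp hz).1
        have hzP : z ∈ P i := (mem_inter.mp hz).2
        rw [hPi, mem_insert, mem_singleton] at hmP hzP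
        rw [mem_singleton]
        by_contra hzm
        have hmeet := Hmeet z hzS m hmM
        rcases hmP with rfl | rfl <;> rcases hzP with rfl | rfl
        · exact hzm rfl
        · exact hyx hmeet
        · exact hxy hmeet
        · exact hzm rfl
      have h1 : (S ∩ P i).card ≤ 1 := by
        simpa using card_le_card hsub
      have h2 : (M ∩ P i).card ≤ (S ∩ P i).card :=
        card_le_card (inter_subset_inter_right hMS)
      omega
    · rw [not_nonempty_iff_eq_empty] at hM
      rw [hM, card_empty]
      have : (S ∩ P i).card ≤ 2 := by
        calc (S ∩ P i).card ≤ (P i).card := card_le_card inter_subset_right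
          _ ≤ 2 := by rw [hPi]; exact (card_insert_le _ _).trans (by simp)
      omega
  -- assemble
  have hScard : S.card ≤ 1 + ∑ i ∈ range (k - 1), (S ∩ P i).card := by
    have h1 : S = S ∩ insert m₀ B := (inter_eq_left.mpr hcover).symm
    have h2 : S ∩ insert m₀ B = (S ∩ {m₀}) ∪ (S ∩ B) := by
      rw [insert_eq, inter_union_distrib_left]
    have h3 : (S ∩ B) = (range (k - 1)).biUnion (fun i => S ∩ P i) := by
      ext z
      simp [hB, mem_biUnion, mem_inter, and_comm]
      tauto
    calc S.card = ((S ∩ {m₀}) ∪ (S ∩ B)).card := by rw [← h2, ← h1]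
      _ ≤ (S ∩ {m₀}).card + (S ∩ B).card := card_union_le _ _
      _ ≤ 1 + ∑ i ∈ range (k - 1), (S ∩ P i).card := by
          gcongr
          · simpa using card_le_card (inter_subset_right (s₁ := S) (s₂ := {m₀}))
          · rw [h3]; exact card_biUnion_le
  have hMcard : M.card ≤ 1 + ∑ i ∈ range (k - 1), (M ∩ P i).card := by
    have hcover' : M ⊆ insert m₀ B := hMS.trans hcover
    have h1 : M = M ∩ insert m₀ B := (inter_eq_left.mpr hcover').symm
    have h2 : M ∩ insert m₀ B = (M ∩ {m₀}) ∪ (M ∩ B) := by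
      rw [insert_eq, inter_union_distrib_left]
    have h3 : (M ∩ B) = (range (k - 1)).biUnion (fun i => M ∩ P i) := by
      ext z
      simp [hB, mem_biUnion, mem_inter, and_comm]
      tauto
    calc M.card = ((M ∩ {m₀}) ∪ (M ∩ B)).card := by rw [← h2, ← h1]
      _ ≤ (M ∩ {m₀}).card + (M ∩ B).card := card_union_le _ _
      _ ≤ 1 + ∑ i ∈ range (k - 1), (M ∩ P i).card := by
          gcongr
          · simpa using card_le_card (inter_subset_right (s₁ := M) (s₂ := {m₀}))
          · rw [h3]; exact card_biUnion_le
  have hsum : ∑ i ∈ range (k - 1), ((S ∩ P i).card + (M ∩ P i).card)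
      ≤ ∑ i ∈ range (k - 1), 2 := sum_le_sum hpair
  rw [sum_const, card_range, smul_eq_mul] at hsum
  rw [sum_add_distrib] at hsum
  omega

lemma circle_lem {n k s : ℕ} [NeZero n] (hk : 1 ≤ k) (h2k : 2 * k + 1 ≤ n)
    (hks : n + 1 ≤ k * s)
    (Y : Fin s → Finset (ZMod n))
    (hY : ∀ i j, i ≠ j → ∀ t ∈ Y i, ∀ u ∈ Y j, (arcI n k t ∩ arcI n k u).Nonempty) :
    ∑ i, (Y i).card ≤ k * s := by
  classical
  set S : Finset (ZMod n) := univ.filter (fun t : ZMod n => ∃ i, t ∈ Y i) with hS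
  set p : ZMod n → Prop := fun t => ∀ u ∈ S, (arcI n k t ∩ arcI n k u).Nonempty with hp
  set M : Finset (ZMod n) := S.filter p with hM
  set c : ZMod n → ℕ := fun t => (univ.filter (fun i : Fin s => t ∈ Y i)).card with hc
  have hs2 : 2 ≤ s := by nlinarith
  have h1 : ∑ i, (Y i).card = ∑ t : ZMod n, c t := by
    have he : ∀ i, (Y i).card = ∑ t : ZMod n, if t ∈ Y i then 1 else 0 := by
      intro i
      rw [Finset.sum_ite_mem, univ_inter, card_eq_sum_ones]
    simp_rw [he, hc, Finset.card_filter]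
    rw [Finset.sum_comm]
  have h2 : ∑ t : ZMod n, c t = ∑ t ∈ S, c t := by
    symm
    apply Finset.sum_subset (subset_univ S)
    intro t _ htS
    rw [hc]
    simp only [card_eq_zero, filter_eq_empty_iff]
    intro i _
    rw [hS] at htS
    simp only [mem_filter, mem_univ, true_and, not_exists] at htS
    exact htS i
  have h3 : ∑ t ∈ S, c t = ∑ t ∈ M, c t + ∑ t ∈ S.filter (fun t => ¬ p t), c t :=
    (Finset.sum_filter_add_sum_filter_not S p c).symm
  have hcs : ∀ t ∈ M, c t ≤ s := by
    intro t _
    exact (card_filter_le _ _).trans (by simp)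
  have hc1 : ∀ t ∈ S.filter (fun t => ¬ p t), c t ≤ 1 := by
    intro t ht
    rw [mem_filter] at ht
    obtain ⟨htS, htp⟩ := ht
    have hex : ∃ u ∈ S, ¬ (arcI n k t ∩ arcI n k u).Nonempty := by
      by_contra hcon
      push_neg at hcon
      exact htp (fun u hu => hcon u hu)
    obtain ⟨u, huS, hdisj⟩ := hex
    rw [hS] at huS
    obtain ⟨l, hul⟩ := (mem_filter.mp huS).2
    apply card_le_one.mpr
    intro i hi j hj
    simp only [mem_filter, mem_univ, true_and] at hi hj
    by_contra hij
    rcases eq_or_ne l i with rfl | hli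
    · have hlj : l ≠ j := fun h => hij (h ▸ rfl)
      exact hdisj (hY j l hlj.symm t hj u hul)
    · exact hdisj (hY i l hli.symm t hi u hul)
  have hb1 : ∑ t ∈ M, c t ≤ M.card * s := by
    calc ∑ t ∈ M, c t ≤ ∑ t ∈ M, s := sum_le_sum hcs
      _ = M.card * s := by rw [sum_const, smul_eq_mul]
  have hb2 : ∑ t ∈ S.filter (fun t => ¬ p t), c t ≤ S.card - M.card := by
    have := Finset.card_filter_add_card_filter_not (s := S) (p := p)
    calc ∑ t ∈ S.filter (fun t => ¬ p t), c t
        ≤ ∑ t ∈ S.filter (fun t => ¬ p t), 1 := sum_le_sum hc1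
      _ = (S.filter (fun t => ¬ p t)).card := by rw [sum_const, smul_eq_mul, mul_one]
      _ = S.card - M.card := by
          have hMc : M.card = (S.filter p).card := rfl
          omega
  have hSn : S.card ≤ n := by
    have := card_le_univ S
    rwa [ZMod.card] at this
  rcases M.eq_empty_or_nonempty with hMe | ⟨m₀, hm₀⟩
  · rw [h1, h2, h3, hMe]
    simp only [sum_empty, card_empty, zero_add]
    calc ∑ t ∈ S.filter (fun t => ¬ p t), c t ≤ S.card - M.card := hb2
      _ ≤ n := by omega
      _ ≤ k * s := by omega
  · have hMS : M ⊆ S := filter_subset _ _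
    have hpair : S.card + M.card ≤ 2 * k := by
      apply pairing hk (by omega) S M hMS hm₀
      intro t ht u hu
      rw [inter_comm]
      exact (mem_filter.mp hu).2 t ht
    have hmk : M.card ≤ k := by
      have := card_le_card hMS
      omega
    have hMm : 1 ≤ M.card := card_pos.mpr ⟨m₀, hm₀⟩
    have hrest : S.card - M.card ≤ 2 * (k - M.card) := by omega
    have hmul : 2 * (k - M.card) ≤ s * (k - M.card) :=
      Nat.mul_le_mul_right _ hs2
    have hfin : s * (k - M.card) + s * M.card = k * s := by
      rw [← Nat.mul_add, Nat.sub_add_cancel hmk, Nat.mul_comm]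
    calc ∑ i, (Y i).card = ∑ t ∈ M, c t + ∑ t ∈ S.filter (fun t => ¬ p t), c t := by
          rw [h1, h2, h3]
      _ ≤ M.card * s + (S.card - M.card) := Nat.add_le_add hb1 hb2
      _ ≤ M.card * s + 2 * (k - M.card) := Nat.add_le_add_left hrest _
      _ ≤ M.card * s + s * (k - M.card) := Nat.add_le_add_left hmul _
      _ = s * (k - M.card) + s * M.card := by rw [Nat.mul_comm M.card s]; ring
      _ = k * s := hfin


/-- (Frankl's theorem.) Let `n > 2k` and `s > n/k`, and let `X₁, …, X_s` be
families of `k`-element subsets of an `n`-element set such that `A ∩ B ≠ ∅`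
whenever `A ∈ Xᵢ`, `B ∈ Xⱼ` with `i ≠ j`. Then `Σᵢ |Xᵢ| ≤ s·C(n-1, k-1)`. -/
theorem stmt_10 (n k s : ℕ) (hk : 1 ≤ k) (hn : 2 * k < n)
    (hs : (n : ℝ) / (k : ℝ) < (s : ℝ))
    (X : Fin s → Finset (Finset (Fin n)))
    (hXk : ∀ i, ∀ A ∈ X i, A.card = k)
    (hcross : ∀ i j : Fin s, i ≠ j → ∀ A ∈ X i, ∀ B ∈ X j, (A ∩ B).Nonempty) :
    ∑ i, (X i).card ≤ s * (n - 1).choose (k - 1) := by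
  classical
  haveI : NeZero n := ⟨by omega⟩
  have hkn : k ≤ n := by omega
  have hks : n + 1 ≤ k * s := by
    have hk0 : (0:ℝ) < (k:ℝ) := by
      have : (0:ℕ) < k := hk
      exact_mod_cast this
    have h1 : (n:ℝ) < (s:ℝ) * (k:ℝ) := (div_lt_iff₀ hk0).mp hs
    have h2 : (n:ℝ) < ((k * s : ℕ) : ℝ) := by push_cast; nlinarith
    have h3 : n < k * s := by exact_mod_cast h2
    omega
  set Y : (ZMod n ≃ Fin n) → Fin s → Finset (ZMod n) :=
    fun σ i => univ.filter (fun t => (arcI n k t).image σ ∈ X i) with hY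
  -- per-circle bound
  have hcirc : ∀ σ : ZMod n ≃ Fin n, ∑ i, (Y σ i).card ≤ k * s := by
    intro σ
    apply circle_lem hk (by omega) hks
    intro i j hij t ht u hu
    rw [hY] at ht hu
    simp only [mem_filter, mem_univ, true_and] at ht hu
    have h := hcross i j hij _ ht _ hu
    rw [← Finset.image_inter _ _ σ.injective] at h
    exact Finset.Nonempty.of_image h
  -- sum over all σ
  have hsum : ∑ σ : ZMod n ≃ Fin n, ∑ i, (Y σ i).card
      ≤ Fintype.card (ZMod n ≃ Fin n) * (k * s) := by
    calc ∑ σ : ZMod n ≃ Fin n, ∑ i, (Y σ i).card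
        ≤ ∑ _σ : ZMod n ≃ Fin n, k * s := sum_le_sum (fun σ _ => hcirc σ)
      _ = Fintype.card (ZMod n ≃ Fin n) * (k * s) := by
          rw [sum_const, smul_eq_mul, card_univ]
  -- card of the equiv type
  have hcardeq : Fintype.card (ZMod n ≃ Fin n) = Nat.factorial n := by
    have e : ZMod n ≃ Fin n := Fintype.equivOfCardEq (by rw [ZMod.card, Fintype.card_fin])
    rw [Fintype.card_equiv e, ZMod.card]
  -- fiber count
  have hfib : ∀ (t : ZMod n) (i : Fin s),
      (univ.filter (fun σ : ZMod n ≃ Fin n => (arcI n k t).image σ ∈ X i)).card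
        = (X i).card * (Nat.factorial k * Nat.factorial (n - k)) := by
    intro t i
    have key : ∀ A ∈ X i,
        (univ.filter (fun σ : ZMod n ≃ Fin n => (arcI n k t).image σ = A)).card
          = Nat.factorial k * Nat.factorial (n - k) := by
      intro A hAX
      have hc := count_perms (α := ZMod n) (β := Fin n)
          (by rw [ZMod.card, Fintype.card_fin]) (arcI n k t) A
          (by rw [arcI_card hkn, hXk i A hAX])
      rw [hc, hXk i A hAX, Fintype.card_fin]
    rw [Finset.card_eq_sum_card_fiberwise
      (f := fun σ : ZMod n ≃ Fin n => (arcI n k t).image σ)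
      (s := univ.filter (fun σ : ZMod n ≃ Fin n => (arcI n k t).image σ ∈ X i))
      (t := X i) (fun σ hσ => (mem_filter.mp hσ).2)]
    have h2 : ∀ A ∈ X i,
        ((univ.filter (fun σ : ZMod n ≃ Fin n => (arcI n k t).image σ ∈ X i)).filter
          (fun σ : ZMod n ≃ Fin n => (arcI n k t).image σ = A)).card
        = Nat.factorial k * Nat.factorial (n - k) := by
      intro A hAX
      rw [filter_filter]
      have h3 : (univ.filter (fun σ : ZMod n ≃ Fin n =>
          (arcI n k t).image σ ∈ X i ∧ (arcI n k t).image σ = A))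
          = univ.filter (fun σ : ZMod n ≃ Fin n => (arcI n k t).image σ = A) := by
        apply filter_congr
        intro σ _
        constructor
        · exact fun h => h.2
        · exact fun h => ⟨h ▸ hAX, h⟩
      rw [h3]
      exact key A hAX
    rw [Finset.sum_congr rfl h2, sum_const, smul_eq_mul]
  -- compute the total sum
  have hT : ∑ σ : ZMod n ≃ Fin n, ∑ i, (Y σ i).card
      = (∑ i, (X i).card) * (n * (Nat.factorial k * Nat.factorial (n - k))) := by
    calc ∑ σ : ZMod n ≃ Fin n, ∑ i, (Y σ i).card
        = ∑ i, ∑ σ : ZMod n ≃ Fin n, (Y σ i).card := sum_comm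
      _ = ∑ i, ∑ σ : ZMod n ≃ Fin n, ∑ t : ZMod n,
            (if (arcI n k t).image σ ∈ X i then 1 else 0) := by
          apply sum_congr rfl; intro i _
          apply sum_congr rfl; intro σ _
          rw [hY, Finset.card_filter]
      _ = ∑ i, ∑ t : ZMod n, ∑ σ : ZMod n ≃ Fin n,
            (if (arcI n k t).image σ ∈ X i then 1 else 0) := by
          apply sum_congr rfl; intro i _
          exact sum_comm
      _ = ∑ i, ∑ t : ZMod n,
            ((univ.filter (fun σ : ZMod n ≃ Fin n => (arcI n k t).image σ ∈ X i)).card) := by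
          apply sum_congr rfl; intro i _
          apply sum_congr rfl; intro t _
          rw [Finset.card_filter]
      _ = ∑ i, ∑ _t : ZMod n, (X i).card * (Nat.factorial k * Nat.factorial (n - k)) := by
          apply sum_congr rfl; intro i _
          exact sum_congr rfl (fun t _ => hfib t i)
      _ = ∑ i, n * ((X i).card * (Nat.factorial k * Nat.factorial (n - k))) := by
          apply sum_congr rfl; intro i _
          rw [sum_const, smul_eq_mul, card_univ, ZMod.card]
      _ = (∑ i, (X i).card) * (n * (Nat.factorial k * Nat.factorial (n - k))) := by
          rw [Finset.sum_mul]
          apply sum_congr rfl; intro i _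
          ring
  -- final arithmetic
  set D : ℕ := n * (Nat.factorial k * Nat.factorial (n - k)) with hD
  have hDpos : 0 < D := by
    have := Nat.factorial_pos k
    have := Nat.factorial_pos (n - k)
    have : 0 < n := by omega
    positivity
  have hkey : Nat.factorial n * (k * s) = (s * (n - 1).choose (k - 1)) * D := by
    have e1 := Nat.choose_mul_factorial_mul_factorial (show k - 1 ≤ n - 1 by omega)
    have e2 : (n - 1) - (k - 1) = n - k := by omega
    rw [e2] at e1
    have e3 : n * Nat.factorial (n - 1) = Nat.factorial n := Nat.mul_factorial_pred (by omega)
    have e4 : k * Nat.factorial (k - 1) = Nat.factorial k := Nat.mul_factorial_pred (by omega)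
    calc Nat.factorial n * (k * s)
        = (n * Nat.factorial (n - 1)) * (k * s) := by rw [e3]
      _ = (n * ((n - 1).choose (k - 1) * Nat.factorial (k - 1) * Nat.factorial (n - k)))
            * (k * s) := by rw [e1]
      _ = (s * (n - 1).choose (k - 1))
            * (n * ((k * Nat.factorial (k - 1)) * Nat.factorial (n - k))) := by ring
      _ = (s * (n - 1).choose (k - 1)) * D := by rw [e4, hD]
  have hfinal : (∑ i, (X i).card) * D ≤ (s * (n - 1).choose (k - 1)) * D := by
    rw [← hkey, ← hT]
    rw [hcardeq] at hsum
    exact hsum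
  exact Nat.le_of_mul_le_mul_right hfinal hDpos
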